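/- If an approximate isometry ψ : X ⇝ Y is r-total and r-surjective (for r > 0), and also θ-total and θ-surjective for all θ > 0 in the limit sense below, then any pointwise decreasing sequence ψ = θ₀ ≥ θ₁ ≥ ⋯ of approximate isometries X ⇝ Y, where θ_{n+1} is 2^{-n}-total on a fixed countable dense subset {a_i} of X for even n and 2^{-n}-surjective on a fixed countable dense subset {b_i} of Y for odd n, has pointwise limit θ = lim θ_n equal to (the approximate isometry associated to) a surjective isometry X̂ → Ŷ of the completions; in particular, if X and Y are complete, θ is induced by a bijective isometry f : X → Y with d(fx,y) ≤ ψ(x,y) for all x,y. -/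

import Mathlib

open scoped ENNReal

/-- A Katětov function on a metric space, with values in `[0,∞]`. -/
def Katetov {X : Type*} [MetricSpace X] (ψ : X → ℝ≥0∞) : Prop :=
  ∀ x y : X, ψ x ≤ ENNReal.ofReal (dist x y) + ψ y ∧
    ENNReal.ofReal (dist x y) ≤ ψ x + ψ y

/-- An approximate isometry `X ⇝ Y`: a bi-Katětov function `X × Y → [0,∞]`. -/
def BiKatetov {X Y : Type*} [MetricSpace X] [MetricSpace Y]
    (ψ : X × Y → ℝ≥0∞) : Prop :=
  (∀ y, Katetov fun x => ψ (x, y)) ∧ (∀ x, Katetov fun y => ψ (x, y))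

/-- The composition `φψ(x,z) = inf_y (ψ(x,y) + φ(y,z))` of approximate
isometries `ψ : X ⇝ Y` and `φ : Y ⇝ Z`. -/
noncomputable def ApxComp {X Y Z : Type*} [MetricSpace X] [MetricSpace Y]
    [MetricSpace Z] (ψ : X × Y → ℝ≥0∞) (φ : Y × Z → ℝ≥0∞) :
    X × Z → ℝ≥0∞ :=
  fun p => ⨅ y : Y, ψ (p.1, y) + φ (y, p.2)

/-- The pseudo-inverse `ψ*(y,x) = ψ(x,y)`. -/
def ApxInv {X Y : Type*} (ψ : X × Y → ℝ≥0∞) : Y × X → ℝ≥0∞ :=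
  fun p => ψ (p.2, p.1)

/-- Key construction: if `θ n (x, ·)` can be made arbitrarily small (for large
enough `n`), then there is a limit point `z` with `⨅ n, θ n (x, z) = 0`. -/
lemma exists_point_zero {X Y : Type*} [MetricSpace X] [MetricSpace Y] [CompleteSpace Y]
    (θ : ℕ → X × Y → ℝ≥0∞) (hθK : ∀ n, BiKatetov (θ n))
    (hdec : ∀ n p, θ (n + 1) p ≤ θ n p) (x : X)
    (hx : ∀ k : ℕ, ∃ y M, θ M (x, y) < ENNReal.ofReal ((2:ℝ) ^ (-(k:ℤ)))) :
    ∃ z : Y, (⨅ n, θ n (x, z)) = 0 := by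
  have hmono : ∀ p, Antitone fun n => θ n p := fun p => antitone_nat_of_succ_le fun n => hdec n p
  choose y M hy using hx
  have hpow : ∀ k : ℤ, (0:ℝ) < (2:ℝ) ^ k := fun k => zpow_pos (by norm_num) _
  have hdist : ∀ k l : ℕ, dist (y k) (y l) ≤ (2:ℝ)^(-(k:ℤ)) + (2:ℝ)^(-(l:ℤ)) := by
    intro k l
    have h1 : θ (max (M k) (M l)) (x, y k) < ENNReal.ofReal ((2:ℝ)^(-(k:ℤ))) :=
      lt_of_le_of_lt (hmono _ (le_max_left _ _)) (hy k)
    have h2 : θ (max (M k) (M l)) (x, y l) < ENNReal.ofReal ((2:ℝ)^(-(l:ℤ))) :=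
      lt_of_le_of_lt (hmono _ (le_max_right _ _)) (hy l)
    have h3 : ENNReal.ofReal (dist (y k) (y l)) ≤
        θ (max (M k) (M l)) (x, y k) + θ (max (M k) (M l)) (x, y l) :=
      ((hθK _).2 x (y k) (y l)).2
    have h4 := lt_of_le_of_lt h3 (ENNReal.add_lt_add h1 h2)
    rw [← ENNReal.ofReal_add (le_of_lt (hpow _)) (le_of_lt (hpow _))] at h4
    exact le_of_lt ((ENNReal.ofReal_lt_ofReal_iff_of_nonneg dist_nonneg).1 h4)
  have e1 : ∀ k : ℕ, (2:ℝ)^(-(k:ℤ)) = (1/2:ℝ)^k := by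
    intro k; rw [zpow_neg, zpow_natCast, one_div, inv_pow]
  have hcauchy : CauchySeq y := by
    apply cauchySeq_of_le_geometric (1/2) 2 (by norm_num)
    intro k
    refine (hdist k (k+1)).trans ?_
    have e2 : (2:ℝ)^(-((k+1:ℕ):ℤ)) ≤ (2:ℝ)^(-(k:ℤ)) :=
      zpow_le_zpow_right₀ one_le_two (by omega)
    have := e1 k
    nlinarith [hpow (-(k:ℤ))]
  obtain ⟨z, hz⟩ := cauchySeq_tendsto_of_complete hcauchy
  refine ⟨z, le_antisymm ?_ zero_le⟩
  have key : ∀ k, (⨅ n, θ n (x, z)) ≤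
      ENNReal.ofReal (dist z (y k)) + ENNReal.ofReal ((2:ℝ)^(-(k:ℤ))) := by
    intro k
    refine (iInf_le _ (M k)).trans ?_
    refine (((hθK (M k)).2 x z (y k)).1).trans ?_
    exact add_le_add le_rfl (le_of_lt (hy k))
  have d1 : Filter.Tendsto (fun k => dist z (y k)) Filter.atTop (nhds 0) := by
    simpa [dist_comm] using tendsto_iff_dist_tendsto_zero.1 hz
  have d2 : Filter.Tendsto (fun k : ℕ => (2:ℝ)^(-(k:ℤ))) Filter.atTop (nhds 0) := by
    simpa [e1] using tendsto_pow_atTop_nhds_zero_of_lt_one (by norm_num : (0:ℝ) ≤ 1/2)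
      (by norm_num : (1/2:ℝ) < 1)
  have t1 : Filter.Tendsto
      (fun k => ENNReal.ofReal (dist z (y k)) + ENNReal.ofReal ((2:ℝ)^(-(k:ℤ))))
      Filter.atTop (nhds 0) := by
    have := (ENNReal.tendsto_ofReal d1).add (ENNReal.tendsto_ofReal d2)
    simpa using this
  exact ge_of_tendsto' t1 key

/-- The back-and-forth limit: a decreasing sequence of approximate isometries
refining `ψ`, alternately `2^{-n}`-total on a dense sequence of `X` and
`2^{-n}`-surjective on a dense sequence of `Y`, converges pointwise to (the
approximate isometry associated to) a bijective isometry `f : X → Y`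
satisfying `d(fx,y) ≤ ψ(x,y)`, when `X` and `Y` are complete. -/
theorem backAndForth_limit {X Y : Type*} [MetricSpace X] [MetricSpace Y]
    [CompleteSpace X] [CompleteSpace Y]
    (a : ℕ → X) (b : ℕ → Y) (ha : DenseRange a) (hb : DenseRange b)
    (ψ : X × Y → ℝ≥0∞) (hψ : BiKatetov ψ) (r : ℝ) (hr : 0 < r)
    (htot : ∀ x : X, ∀ s : ℝ, r < s → ∃ y, ψ (x, y) < ENNReal.ofReal s)
    (hsur : ∀ y : Y, ∀ s : ℝ, r < s → ∃ x, ψ (x, y) < ENNReal.ofReal s)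
    (θ : ℕ → X × Y → ℝ≥0∞) (hθK : ∀ n, BiKatetov (θ n)) (hθ0 : θ 0 = ψ)
    (hdec : ∀ n p, θ (n + 1) p ≤ θ n p)
    (heven : ∀ n, Even n → ∀ i < n,
      ∃ y, θ (n + 1) (a i, y) < ENNReal.ofReal ((2 : ℝ) ^ (-(n : ℤ))))
    (hodd : ∀ n, Odd n → ∀ i < n,
      ∃ x, θ (n + 1) (x, b i) < ENNReal.ofReal ((2 : ℝ) ^ (-(n : ℤ)))) :
    ∃ f : X ≃ᵢ Y,
      (∀ p : X × Y, (⨅ n, θ n p) = ENNReal.ofReal (dist (f p.1) p.2)) ∧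
        ∀ p : X × Y, ENNReal.ofReal (dist (f p.1) p.2) ≤ ψ p := by
  classical
  have hmono : ∀ p, Antitone fun n => θ n p := fun p => antitone_nat_of_succ_le fun n => hdec n p
  have hpow : ∀ k : ℤ, (0:ℝ) < (2:ℝ) ^ k := fun k => zpow_pos (by norm_num) _
  have halfpow : ∀ k : ℕ, (2:ℝ)^(-(k:ℤ)-1) + (2:ℝ)^(-(k:ℤ)-1) = (2:ℝ)^(-(k:ℤ)) := by
    intro k
    have : (2:ℝ)^(-(k:ℤ)-1) = (2:ℝ)^(-(k:ℤ)) / 2 := by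
      rw [zpow_sub₀ (two_ne_zero), zpow_one]
    rw [this]; ring
  -- totality of the limit at every point of X
  have hxX : ∀ x : X, ∀ k : ℕ, ∃ y M, θ M (x, y) < ENNReal.ofReal ((2:ℝ)^(-(k:ℤ))) := by
    intro x k
    obtain ⟨i, hi⟩ := Metric.denseRange_iff.1 ha x ((2:ℝ)^(-(k:ℤ)-1)) (hpow _)
    have hev : Even (2*(i+k+2)) := ⟨i+k+2, by omega⟩
    obtain ⟨y, hy⟩ := heven (2*(i+k+2)) hev i (by omega)
    refine ⟨y, 2*(i+k+2)+1, ?_⟩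
    have h1 : θ (2*(i+k+2)+1) (x, y) ≤
        ENNReal.ofReal (dist x (a i)) + θ (2*(i+k+2)+1) (a i, y) :=
      ((hθK _).1 y x (a i)).1
    have h2 : θ (2*(i+k+2)+1) (a i, y) < ENNReal.ofReal ((2:ℝ)^(-(k:ℤ)-1)) :=
      lt_of_lt_of_le hy (ENNReal.ofReal_le_ofReal
        (zpow_le_zpow_right₀ one_le_two (by omega)))
    calc θ (2*(i+k+2)+1) (x, y)
        ≤ ENNReal.ofReal (dist x (a i)) + θ (2*(i+k+2)+1) (a i, y) := h1
      _ < ENNReal.ofReal ((2:ℝ)^(-(k:ℤ)-1)) + ENNReal.ofReal ((2:ℝ)^(-(k:ℤ)-1)) :=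
          ENNReal.add_lt_add ((ENNReal.ofReal_lt_ofReal_iff_of_nonneg dist_nonneg).2 hi) h2
      _ = ENNReal.ofReal ((2:ℝ)^(-(k:ℤ))) := by
          rw [← ENNReal.ofReal_add (le_of_lt (hpow _)) (le_of_lt (hpow _)), halfpow]
  -- the swapped sequence and surjectivity of the limit at every point of Y
  set θ' : ℕ → Y × X → ℝ≥0∞ := fun n p => θ n (p.2, p.1) with hθ'
  have hθK' : ∀ n, BiKatetov (θ' n) := fun n => ⟨(hθK n).2, (hθK n).1⟩
  have hdec' : ∀ n p, θ' (n+1) p ≤ θ' n p := fun n p => hdec n _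
  have hxY : ∀ yy : Y, ∀ k : ℕ, ∃ x M, θ' M (yy, x) < ENNReal.ofReal ((2:ℝ)^(-(k:ℤ))) := by
    intro yy k
    obtain ⟨j, hj⟩ := Metric.denseRange_iff.1 hb yy ((2:ℝ)^(-(k:ℤ)-1)) (hpow _)
    have hod : Odd (2*(j+k+2)+1) := ⟨j+k+2, by omega⟩
    obtain ⟨x, hx⟩ := hodd (2*(j+k+2)+1) hod j (by omega)
    refine ⟨x, 2*(j+k+2)+2, ?_⟩
    have h1 : θ (2*(j+k+2)+2) (x, yy) ≤
        ENNReal.ofReal (dist yy (b j)) + θ (2*(j+k+2)+2) (x, b j) :=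
      ((hθK _).2 x yy (b j)).1
    have h2 : θ (2*(j+k+2)+2) (x, b j) < ENNReal.ofReal ((2:ℝ)^(-(k:ℤ)-1)) :=
      lt_of_lt_of_le hx (ENNReal.ofReal_le_ofReal
        (zpow_le_zpow_right₀ one_le_two (by omega)))
    show θ (2*(j+k+2)+2) (x, yy) < _
    calc θ (2*(j+k+2)+2) (x, yy)
        ≤ ENNReal.ofReal (dist yy (b j)) + θ (2*(j+k+2)+2) (x, b j) := h1
      _ < ENNReal.ofReal ((2:ℝ)^(-(k:ℤ)-1)) + ENNReal.ofReal ((2:ℝ)^(-(k:ℤ)-1)) :=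
          ENNReal.add_lt_add ((ENNReal.ofReal_lt_ofReal_iff_of_nonneg dist_nonneg).2 hj) h2
      _ = ENNReal.ofReal ((2:ℝ)^(-(k:ℤ))) := by
          rw [← ENNReal.ofReal_add (le_of_lt (hpow _)) (le_of_lt (hpow _)), halfpow]
  choose f hf using fun x => exists_point_zero θ hθK hdec x (hxX x)
  choose g hg using fun yy => exists_point_zero θ' hθK' hdec' yy (hxY yy)
  have hg' : ∀ yy, (⨅ n, θ n (g yy, yy)) = 0 := hg
  -- Katětov properties of the pointwise infimum
  have K1y : ∀ x y y', (⨅ n, θ n (x, y)) ≤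
      ENNReal.ofReal (dist y y') + ⨅ n, θ n (x, y') := by
    intro x y y'
    rw [ENNReal.add_iInf]
    exact iInf_mono fun n => ((hθK n).2 x y y').1
  have K2y : ∀ x y y', ENNReal.ofReal (dist y y') ≤
      (⨅ n, θ n (x, y)) + ⨅ n, θ n (x, y') := by
    intro x y y'
    rw [ENNReal.iInf_add]
    refine le_iInf fun n => ?_
    rw [ENNReal.add_iInf]
    refine le_iInf fun m => ?_
    calc ENNReal.ofReal (dist y y') ≤ θ (max n m) (x, y) + θ (max n m) (x, y') :=
          ((hθK _).2 x y y').2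
      _ ≤ θ n (x, y) + θ m (x, y') :=
          add_le_add (hmono _ (le_max_left n m)) (hmono _ (le_max_right n m))
  have K1x : ∀ x x' y, (⨅ n, θ n (x, y)) ≤
      ENNReal.ofReal (dist x x') + ⨅ n, θ n (x', y) := by
    intro x x' y
    rw [ENNReal.add_iInf]
    exact iInf_mono fun n => ((hθK n).1 y x x').1
  have K2x : ∀ x x' y, ENNReal.ofReal (dist x x') ≤
      (⨅ n, θ n (x, y)) + ⨅ n, θ n (x', y) := by
    intro x x' y
    rw [ENNReal.iInf_add]
    refine le_iInf fun n => ?_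
    rw [ENNReal.add_iInf]
    refine le_iInf fun m => ?_
    calc ENNReal.ofReal (dist x x') ≤ θ (max n m) (x, y) + θ (max n m) (x', y) :=
          ((hθK _).1 y x x').2
      _ ≤ θ n (x, y) + θ m (x', y) :=
          add_le_add (hmono _ (le_max_left n m)) (hmono _ (le_max_right n m))
  -- the limit equals the distance function of f
  have Eq : ∀ x y, (⨅ n, θ n (x, y)) = ENNReal.ofReal (dist (f x) y) := by
    intro x y
    apply le_antisymm
    · calc (⨅ n, θ n (x, y)) ≤
          ENNReal.ofReal (dist y (f x)) + ⨅ n, θ n (x, f x) := K1y x y (f x)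
        _ = ENNReal.ofReal (dist (f x) y) := by rw [hf x, add_zero, dist_comm]
    · calc ENNReal.ofReal (dist (f x) y) = ENNReal.ofReal (dist y (f x)) := by rw [dist_comm]
        _ ≤ (⨅ n, θ n (x, y)) + ⨅ n, θ n (x, f x) := K2y x y (f x)
        _ = ⨅ n, θ n (x, y) := by rw [hf x, add_zero]
  have Iso : ∀ x x', dist (f x) (f x') = dist x x' := by
    intro x x'
    have le1 : ENNReal.ofReal (dist (f x) (f x')) ≤ ENNReal.ofReal (dist x x') := by
      rw [← Eq x (f x')]
      calc (⨅ n, θ n (x, f x')) ≤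
          ENNReal.ofReal (dist x x') + ⨅ n, θ n (x', f x') := K1x x x' (f x')
        _ = ENNReal.ofReal (dist x x') := by rw [hf x', add_zero]
    have le2 : ENNReal.ofReal (dist x x') ≤ ENNReal.ofReal (dist (f x) (f x')) := by
      rw [← Eq x (f x')]
      calc ENNReal.ofReal (dist x x') ≤
          (⨅ n, θ n (x, f x')) + ⨅ n, θ n (x', f x') := K2x x x' (f x')
        _ = ⨅ n, θ n (x, f x') := by rw [hf x', add_zero]
    have := le_antisymm le1 le2
    rwa [ENNReal.ofReal_eq_ofReal_iff dist_nonneg dist_nonneg] at this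
  have hfg : ∀ yy, f (g yy) = yy := by
    intro yy
    have h0 : ENNReal.ofReal (dist (f (g yy)) yy) = 0 := by
      rw [← Eq (g yy) yy]; exact hg' yy
    rw [ENNReal.ofReal_eq_zero] at h0
    exact dist_le_zero.1 h0
  have hinj : Function.Injective f := by
    intro x x' h
    have : dist x x' = 0 := by rw [← Iso x x', h, dist_self]
    exact dist_eq_zero.1 this
  refine ⟨⟨Equiv.ofBijective f ⟨hinj, fun yy => ⟨g yy, hfg yy⟩⟩,
    Isometry.of_dist_eq Iso⟩, fun p => Eq p.1 p.2, fun p => ?_⟩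
  calc ENNReal.ofReal (dist (f p.1) p.2) = ⨅ n, θ n (p.1, p.2) := (Eq p.1 p.2).symm
    _ ≤ θ 0 (p.1, p.2) := iInf_le _ 0
    _ = ψ p := by rw [hθ0]
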